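/- Let μ be a measure on Sym2 (OnePoint ℝ) such that for all x, y ∈ ℍ the crossing set G⋔([x,y)) is μ-measurable and has finite μ-measure. Define d_μ : ℍ → ℍ → ℝ by d_μ(x,y) := (1/2)·((μ(G⋔([x,y)))).toReal + (μ(G⋔((x,y]))).toReal). Then d_μ is a straight pseudo-distance on ℍ: d_μ(x,y) ≥ 0, d_μ(x,x) = 0, d_μ(x,y) = d_μ(y,x), d_μ(x,z) ≤ d_μ(x,y) + d_μ(y,z) for all x, y, z ∈ ℍ, and whenever dist x y + dist y z = dist x z one has d_μ(x,z) = d_μ(x,y) + d_μ(y,z). -/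

import Mathlib

/- STATEMENT 3: Let μ be a measure on Sym2 (OnePoint ℝ) such that for all x, y ∈ ℍ the
crossing set G⋔([x,y)) is μ-measurable and has finite μ-measure. Define
d_μ(x,y) := (1/2)·(μ(G⋔([x,y))).toReal + μ(G⋔((x,y])).toReal). Then d_μ is a straight
pseudo-distance on ℍ. -/

open OnePoint MeasureTheory
open scoped UpperHalfPlane
open UpperHalfPlane Set Real

noncomputable section

/-- The geodesic of ℍ with ideal endpoints the unordered pair `s` of boundary points:
a Euclidean half-circle for a pair of distinct reals, a vertical line for a pair
`{x, ∞}`, and ∅ for a diagonal pair. -/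
def geod (s : Sym2 (OnePoint ℝ)) : Set ℍ :=
  {z | (∃ a b : ℝ, a ≠ b ∧ s = s((a : OnePoint ℝ), (b : OnePoint ℝ)) ∧
          ‖(z : ℂ) - (↑a + ↑b) / 2‖ = |b - a| / 2) ∨
       (∃ x : ℝ, s = s((x : OnePoint ℝ), ∞) ∧ z.re = x)}

/-- The half-open hyperbolic segment `[x,y)`; the segment `(x,y]` is `segCO y x`. -/
def segCO (x y : ℍ) : Set ℍ := {z | dist x z + dist z y = dist x y} \ {y}

/-- `G⋔(I)`: the set of geodesics crossing `I` in exactly one point. -/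
def Gcross (I : Set ℍ) : Set (Sym2 (OnePoint ℝ)) := {s | ∃ z, geod s ∩ I = {z}}

/-- standard half-circle -/
def SC (c r : ℝ) : Set ℍ := {z | ‖(z : ℂ) - c‖ = r}

/-- standard vertical line -/
def SV (t : ℝ) : Set ℍ := {z | z.re = t}

def IsGeo (S : Set ℍ) : Prop := (∃ c r : ℝ, 0 < r ∧ S = SC c r) ∨ (∃ t : ℝ, S = SV t)

lemma sq_eq_of_nonneg {a b : ℝ} (ha : 0 ≤ a) (hb : 0 ≤ b) (h : a^2 = b^2) : a = b := by
  rw [← Real.sqrt_sq ha, ← Real.sqrt_sq hb, h]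

lemma mem_SC_iff {c r : ℝ} (hr : 0 < r) {z : ℍ} :
    z ∈ SC c r ↔ (z.re - c)^2 + z.im^2 = r^2 := by
  have h1 : ((z : ℂ) - c).re = z.re - c := by simp [UpperHalfPlane.coe_re]
  have h2 : ((z : ℂ) - c).im = z.im := by simp [UpperHalfPlane.coe_im]
  constructor
  · intro h
    have h3 : ‖(z : ℂ) - c‖ ^ 2 = r ^ 2 := by rw [h]
    rw [Complex.sq_norm, Complex.normSq_apply, h1, h2] at h3
    linear_combination h3
  · intro h
    apply sq_eq_of_nonneg (norm_nonneg _) hr.le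
    rw [Complex.sq_norm, Complex.normSq_apply, h1, h2]
    linear_combination h

lemma geod_pair (a b : ℝ) (h : a ≠ b) :
    geod s((a : OnePoint ℝ), (b : OnePoint ℝ)) = SC ((a+b)/2) (|b-a|/2) := by
  have hc : (((a+b)/2 : ℝ) : ℂ) = ((a : ℂ) + b) / 2 := by push_cast; ring
  have hc' : (((a+b)/2 : ℝ) : ℂ) = ((b : ℂ) + a) / 2 := by push_cast; ring
  ext z
  simp only [geod, Set.mem_setOf_eq, SC]
  constructor
  · rintro (⟨a', b', hab', hs, hz⟩ | ⟨x, hs, _⟩)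
    · rw [Sym2.eq_iff] at hs
      rcases hs with ⟨h1, h2⟩ | ⟨h1, h2⟩ <;> rw [OnePoint.coe_eq_coe] at h1 h2
      · subst h1; subst h2; rw [hc]; exact hz
      · subst h1; subst h2; rw [hc', abs_sub_comm]; exact hz
    · rw [Sym2.eq_iff] at hs
      rcases hs with ⟨_, h2⟩ | ⟨h1, _⟩
      · exact absurd h2 (OnePoint.coe_ne_infty b)
      · exact absurd h1 (OnePoint.coe_ne_infty a)
  · intro hz
    exact Or.inl ⟨a, b, h, rfl, by rw [← hc]; exact hz⟩

lemma geod_line (t : ℝ) : geod s((t : OnePoint ℝ), ∞) = SV t := by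
  ext z
  simp only [geod, Set.mem_setOf_eq, SV]
  constructor
  · rintro (⟨a', b', hab', hs, hz⟩ | ⟨x, hs, hz⟩)
    · rw [Sym2.eq_iff] at hs
      rcases hs with ⟨_, h2⟩ | ⟨_, h2⟩
      · exact absurd h2 (OnePoint.infty_ne_coe b')
      · exact absurd h2 (OnePoint.infty_ne_coe a')
    · rw [Sym2.eq_iff] at hs
      rcases hs with ⟨h1, _⟩ | ⟨h1, h2⟩
      · rw [OnePoint.coe_eq_coe] at h1; subst h1; exact hz
      · exact absurd h1 (OnePoint.coe_ne_infty t)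
  · intro hz
    exact Or.inr ⟨t, rfl, hz⟩

lemma isGeo_geod {s : Sym2 (OnePoint ℝ)} (h : (geod s).Nonempty) : IsGeo (geod s) := by
  obtain ⟨z, hz⟩ := h
  rcases hz with ⟨a, b, hab, hs, _⟩ | ⟨x, hs, _⟩
  · exact Or.inl ⟨(a+b)/2, |b-a|/2,
      half_pos (abs_pos.mpr (sub_ne_zero_of_ne (Ne.symm hab))),
      by rw [hs, geod_pair a b hab]⟩
  · exact Or.inr ⟨x, by rw [hs, geod_line x]⟩



lemma uhp_ext_of_re_imsq {p q : ℍ} (hre : p.re = q.re) (him : p.im^2 = q.im^2) : p = q :=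
  UpperHalfPlane.ext' hre (sq_eq_of_nonneg p.im_pos.le q.im_pos.le him)

lemma exists_side {S : Set ℍ} (hS : IsGeo S) :
    ∃ f : ℍ → ℝ, Continuous f ∧ (∀ w, f w = 0 ↔ w ∈ S) ∧
      ∀ L, IsGeo L → (∀ p q, p ∈ L → q ∈ L → f p = f q → p = q) ∨
        (∀ p q, p ∈ L → q ∈ L → f p = f q) := by
  rcases hS with ⟨c, r, hr, rfl⟩ | ⟨t, rfl⟩
  · refine ⟨fun w => r^2 - ((w.re - c)^2 + w.im^2), ?_, ?_, ?_⟩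
    · exact continuous_const.sub
        (((UpperHalfPlane.continuous_re.sub continuous_const).pow 2).add
          (UpperHalfPlane.continuous_im.pow 2))
    · intro w
      rw [mem_SC_iff hr]
      constructor <;> intro h <;> simp only at h ⊢ <;> linarith
    · rintro L (⟨c', r', hr', rfl⟩ | ⟨t', rfl⟩)
      · by_cases hcc : c = c'
        · subst hcc
          right
          intro p q hp hq
          rw [mem_SC_iff hr'] at hp hq
          simp only
          linarith
        · left
          intro p q hp hq hf
          rw [mem_SC_iff hr'] at hp hq
          simp only at hf
          have hf' : (p.re - c)^2 + p.im^2 = (q.re - c)^2 + q.im^2 := by linarith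
          have h5 : (c - c') * p.re = (c - c') * q.re := by
            linear_combination (hp - hq - hf') / 2
          have hre : p.re = q.re := mul_left_cancel₀ (sub_ne_zero_of_ne hcc) h5
          refine uhp_ext_of_re_imsq hre ?_
          rw [hre] at hp
          linarith
      · left
        intro p q hp hq hf
        have hp' : p.re = t' := hp
        have hq' : q.re = t' := hq
        simp only at hf
        refine uhp_ext_of_re_imsq (hp'.trans hq'.symm) ?_
        rw [hp', hq'] at hf
        linarith
  · refine ⟨fun w => w.re - t, ?_, ?_, ?_⟩
    · exact UpperHalfPlane.continuous_re.sub continuous_const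
    · intro w
      constructor <;> intro h
      · simpa [SV] using sub_eq_zero.mp h
      · simp only
        rw [show w.re = t from h]
        ring
    · rintro L (⟨c', r', hr', rfl⟩ | ⟨t', rfl⟩)
      · left
        intro p q hp hq hf
        rw [mem_SC_iff hr'] at hp hq
        simp only at hf
        have hre : p.re = q.re := by linarith
        refine uhp_ext_of_re_imsq hre ?_
        rw [hre] at hp
        linarith
      · right
        intro p q hp hq
        have hp' : p.re = t' := hp
        have hq' : q.re = t' := hq
        simp only
        rw [hp', hq']

lemma geo_subset_of_two_points {S L : Set ℍ} (hS : IsGeo S) (hL : IsGeo L) {p q : ℍ}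
    (hpq : p ≠ q) (hpS : p ∈ S) (hqS : q ∈ S) (hpL : p ∈ L) (hqL : q ∈ L) : L ⊆ S := by
  obtain ⟨f, _, hf0, hinj⟩ := exists_side hS
  rcases hinj L hL with h | h
  · exact absurd (h p q hpL hqL (((hf0 p).mpr hpS).trans ((hf0 q).mpr hqS).symm)) hpq
  · intro w hw
    exact (hf0 w).mp ((h w p hw hpL).trans ((hf0 p).mpr hpS))

lemma geo_unique {S L : Set ℍ} (hS : IsGeo S) (hL : IsGeo L) {p q : ℍ}
    (hpq : p ≠ q) (hpS : p ∈ S) (hqS : q ∈ S) (hpL : p ∈ L) (hqL : q ∈ L) : S = L :=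
  le_antisymm (geo_subset_of_two_points hL hS hpq hpL hqL hpS hqS)
    (geo_subset_of_two_points hS hL hpq hpS hqS hpL hqL)


section Moebius
variable (c r : ℝ)

lemma aux_ne (z : ℍ) : (r : ℂ) - ((z : ℂ) - c) ≠ 0 := by
  intro h
  have h2 := congrArg Complex.im h
  simp only [Complex.sub_im, Complex.ofReal_im, UpperHalfPlane.coe_im, Complex.zero_im] at h2
  exact z.im_ne_zero (by linarith)

lemma aux_ne' (z : ℍ) : (z : ℂ) + 1 ≠ 0 := by
  intro h
  have h2 := congrArg Complex.im h
  simp only [Complex.add_im, Complex.one_im, UpperHalfPlane.coe_im, Complex.zero_im] at h2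
  exact z.im_ne_zero (by linarith)

/-- Möbius map sending the circle `|z - c| = r` to the imaginary axis. -/
def phiC (z : ℂ) : ℂ := (r + (z - c)) / (r - (z - c))

/-- Its inverse. -/
def psiC (z : ℂ) : ℂ := c + r * (z - 1) / (z + 1)

lemma phiC_im (z : ℍ) :
    (phiC c r (z : ℂ)).im = 2 * r * z.im / Complex.normSq ((r : ℂ) - ((z : ℂ) - c)) := by
  rw [phiC, Complex.div_im]
  simp only [Complex.add_im, Complex.sub_im, Complex.ofReal_im, Complex.add_re, Complex.sub_re,
    Complex.ofReal_re, UpperHalfPlane.coe_im, UpperHalfPlane.coe_re]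
  ring

lemma phiC_re (z : ℍ) :
    (phiC c r (z : ℂ)).re =
      (r^2 - Complex.normSq ((z : ℂ) - c)) / Complex.normSq ((r : ℂ) - ((z : ℂ) - c)) := by
  rw [phiC, Complex.div_re]
  simp only [Complex.add_im, Complex.sub_im, Complex.ofReal_im, Complex.add_re, Complex.sub_re,
    Complex.ofReal_re, UpperHalfPlane.coe_im, UpperHalfPlane.coe_re, Complex.normSq_apply]
  ring

lemma psiC_im (z : ℍ) :
    (psiC c r (z : ℂ)).im = 2 * r * z.im / Complex.normSq ((z : ℂ) + 1) := by
  have h1 := aux_ne' z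
  have h2 : psiC c r (z : ℂ) = ((c : ℂ) * ((z : ℂ) + 1) + r * ((z : ℂ) - 1)) / ((z : ℂ) + 1) := by
    rw [psiC]; field_simp
  rw [h2, Complex.div_im]
  simp only [Complex.add_im, Complex.sub_im, Complex.ofReal_im, Complex.add_re, Complex.sub_re,
    Complex.ofReal_re, UpperHalfPlane.coe_im, UpperHalfPlane.coe_re, Complex.one_im,
    Complex.one_re, Complex.mul_im, Complex.mul_re]
  ring

lemma phiC_im_pos (hr : 0 < r) (z : ℍ) : 0 < (phiC c r (z : ℂ)).im := by
  rw [phiC_im]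
  have h1 : 0 < Complex.normSq ((r : ℂ) - ((z : ℂ) - c)) :=
    Complex.normSq_pos.mpr (aux_ne c r z)
  have := z.im_pos
  positivity

lemma psiC_im_pos (hr : 0 < r) (z : ℍ) : 0 < (psiC c r (z : ℂ)).im := by
  rw [psiC_im]
  have h1 : 0 < Complex.normSq ((z : ℂ) + 1) := Complex.normSq_pos.mpr (aux_ne' z)
  have := z.im_pos
  positivity

/-- The Möbius map as a self-map of `ℍ`. -/
def phiH (hr : 0 < r) (z : ℍ) : ℍ := UpperHalfPlane.mk (phiC c r (z : ℂ)) (phiC_im_pos c r hr z)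

def psiH (hr : 0 < r) (z : ℍ) : ℍ := UpperHalfPlane.mk (psiC c r (z : ℂ)) (psiC_im_pos c r hr z)

lemma psiH_phiH (hr : 0 < r) (z : ℍ) : psiH c r hr (phiH c r hr z) = z := by
  apply UpperHalfPlane.ext
  show psiC c r (phiC c r (z : ℂ)) = (z : ℂ)
  have h1 := aux_ne c r z
  have h2 : phiC c r (z : ℂ) + 1 ≠ 0 := aux_ne' (phiH c r hr z)
  rw [psiC]
  rw [phiC] at h2 ⊢
  have hrne : (r : ℂ) ≠ 0 := by exact_mod_cast hr.ne'
  field_simp at h2 ⊢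
  have h2r : (r : ℂ) + r ≠ 0 := by
    intro h
    apply hrne
    have : (2 : ℂ) * r = 0 := by linear_combination h
    simpa using this
  field_simp [h2r]
  ring

lemma phiH_psiH (hr : 0 < r) (z : ℍ) : phiH c r hr (psiH c r hr z) = z := by
  apply UpperHalfPlane.ext
  show phiC c r (psiC c r (z : ℂ)) = (z : ℂ)
  have h1 := aux_ne' z
  have h2 : (r : ℂ) - (psiC c r (z : ℂ) - c) ≠ 0 := aux_ne c r (psiH c r hr z)
  rw [phiC]
  rw [psiC] at h2 ⊢
  have hrne : (r : ℂ) ≠ 0 := by exact_mod_cast hr.ne'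
  field_simp at h2 ⊢
  rw [div_eq_iff (div_ne_zero_iff.mp h2).1]
  ring

lemma phiC_sub (z w : ℍ) :
    phiC c r (z : ℂ) - phiC c r (w : ℂ) =
      2 * r * ((z : ℂ) - w) / (((r : ℂ) - ((z : ℂ) - c)) * ((r : ℂ) - ((w : ℂ) - c))) := by
  have h1 := aux_ne c r z
  have h2 := aux_ne c r w
  rw [phiC, phiC]
  field_simp
  ring

lemma isometry_phiH (hr : 0 < r) : Isometry (phiH c r hr) := by
  refine Isometry.of_dist_eq fun z w => ?_
  rw [UpperHalfPlane.dist_eq, UpperHalfPlane.dist_eq]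
  congr 1
  congr 1
  have h1 : Complex.normSq ((r : ℂ) - ((z : ℂ) - c)) ≠ 0 :=
    fun h => aux_ne c r z (Complex.normSq_eq_zero.mp h)
  have h2 : Complex.normSq ((r : ℂ) - ((w : ℂ) - c)) ≠ 0 :=
    fun h => aux_ne c r w (Complex.normSq_eq_zero.mp h)
  have h1' : 0 < Complex.normSq ((r : ℂ) - ((z : ℂ) - c)) :=
    Complex.normSq_pos.mpr (aux_ne c r z)
  have h2' : 0 < Complex.normSq ((r : ℂ) - ((w : ℂ) - c)) :=
    Complex.normSq_pos.mpr (aux_ne c r w)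
  have hzim := z.im_pos
  have hwim := w.im_pos
  have him1 : (phiH c r hr z).im = 2 * r * z.im / Complex.normSq ((r : ℂ) - ((z : ℂ) - c)) :=
    phiC_im c r z
  have him2 : (phiH c r hr w).im = 2 * r * w.im / Complex.normSq ((r : ℂ) - ((w : ℂ) - c)) :=
    phiC_im c r w
  have hda : dist (phiH c r hr z : ℂ) (phiH c r hr w : ℂ) =
      ‖phiC c r (z : ℂ) - phiC c r (w : ℂ)‖ := by
    rw [Complex.dist_eq]; rfl
  have hdb : dist (z : ℂ) (w : ℂ) = ‖(z : ℂ) - (w : ℂ)‖ := Complex.dist_eq _ _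
  apply sq_eq_of_nonneg
  · positivity
  · positivity
  rw [div_pow, div_pow, hda, hdb, Complex.sq_norm, Complex.sq_norm, phiC_sub]
  rw [mul_pow, mul_pow]
  rw [Real.sq_sqrt (by positivity), Real.sq_sqrt (by positivity)]
  rw [Complex.normSq_div, Complex.normSq_mul, Complex.normSq_mul, Complex.normSq_mul, him1, him2]
  have hn2 : Complex.normSq 2 = 4 := by norm_num [Complex.normSq_apply]
  have hnr : Complex.normSq (r : ℂ) = r ^ 2 := by rw [Complex.normSq_ofReal]; ring
  rw [hn2, hnr]
  generalize Complex.normSq ((r : ℂ) - ((z : ℂ) - c)) = A at h1 h1' ⊢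
  generalize Complex.normSq ((r : ℂ) - ((w : ℂ) - c)) = B at h2 h2' ⊢
  field_simp
  ring

lemma mem_SC_iff_phiH_re (hr : 0 < r) {z : ℍ} :
    ‖(z : ℂ) - c‖ = r ↔ (phiH c r hr z).re = 0 := by
  have h1' : 0 < Complex.normSq ((r : ℂ) - ((z : ℂ) - c)) :=
    Complex.normSq_pos.mpr (aux_ne c r z)
  have hre : (phiH c r hr z).re =
      (r^2 - Complex.normSq ((z : ℂ) - c)) / Complex.normSq ((r : ℂ) - ((z : ℂ) - c)) :=
    phiC_re c r z
  rw [hre, div_eq_zero_iff]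
  constructor
  · intro h
    left
    rw [← Complex.sq_norm, h]
    ring
  · rintro (h | h)
    · have : Complex.normSq ((z : ℂ) - c) = r ^ 2 := by linarith
      rw [← Complex.sq_norm] at this
      exact sq_eq_of_nonneg (norm_nonneg _) hr.le this
    · exact absurd h h1'.ne'

end Moebius
lemma mul_pos_of_ne_zero {x : ℝ} (h : x ≠ 0) : 0 < x * x := mul_self_pos.mpr h

def Bseg (x z : ℍ) : Set ℍ := {w | dist x w + dist w z = dist x z}

lemma mem_uIcc_iff_abs_aux {a b c : ℝ} (hac : a ≤ c) :
    |a - b| + |b - c| = |a - c| ↔ b ∈ Set.Icc a c := by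
  constructor
  · intro h
    have e3 : |a - c| = -(a - c) := abs_of_nonpos (by linarith)
    constructor
    · by_contra hb
      push_neg at hb
      have e1 : |a - b| = a - b := abs_of_nonneg (by linarith)
      have e2 : c - b ≤ |b - c| := by rw [abs_sub_comm]; exact le_abs_self _
      linarith
    · by_contra hb
      push_neg at hb
      have e1 : |b - c| = b - c := abs_of_nonneg (by linarith)
      have e2 : b - a ≤ |a - b| := by rw [abs_sub_comm]; exact le_abs_self _
      linarith
  · rintro ⟨h1, h2⟩
    rw [abs_of_nonpos (by linarith), abs_of_nonpos (by linarith), abs_of_nonpos (by linarith)]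
    ring

lemma mem_uIcc_iff_abs {a b c : ℝ} :
    |a - b| + |b - c| = |a - c| ↔ b ∈ Set.uIcc a c := by
  rcases le_total a c with h | h
  · rw [Set.uIcc_of_le h]; exact mem_uIcc_iff_abs_aux h
  · rw [Set.uIcc_comm, Set.uIcc_of_le h, abs_sub_comm a b, abs_sub_comm b c, abs_sub_comm a c,
      add_comm]
    exact mem_uIcc_iff_abs_aux h

lemma log_mem_uIcc_iff {a b c : ℝ} (ha : 0 < a) (hb : 0 < b) (hc : 0 < c) :
    Real.log a ∈ Set.uIcc (Real.log b) (Real.log c) ↔ a ∈ Set.uIcc b c := by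
  simp only [Set.mem_uIcc]
  rw [Real.log_le_log_iff hb ha, Real.log_le_log_iff ha hc, Real.log_le_log_iff hc ha,
    Real.log_le_log_iff ha hb]

/-- vertical auxiliary point -/
def vpt (z : ℍ) : ℍ := UpperHalfPlane.mk ⟨0, z.im⟩ z.im_pos

lemma vpt_re (z : ℍ) : (vpt z).re = 0 := rfl
lemma vpt_im (z : ℍ) : (vpt z).im = z.im := rfl

lemma dist_log_im_lt {z w : ℍ} (h : z.re ≠ w.re) :
    dist (Real.log z.im) (Real.log w.im) < dist z w := by
  have h1 : dist (Real.log z.im) (Real.log w.im) = dist (vpt z) (vpt w) := by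
    rw [UpperHalfPlane.dist_of_re_eq (show (vpt z).re = (vpt w).re from rfl), vpt_im, vpt_im]
  rw [h1, UpperHalfPlane.dist_eq, UpperHalfPlane.dist_eq, vpt_im, vpt_im]
  have hs : (0:ℝ) < 2 * Real.sqrt (z.im * w.im) := by
    have := z.im_pos; have := w.im_pos; positivity
  have hnum : dist ((vpt z : ℍ) : ℂ) ((vpt w : ℍ) : ℂ) < dist (z : ℂ) (w : ℂ) := by
    rw [Complex.dist_eq, Complex.dist_eq]
    have hv : ((vpt z : ℍ) : ℂ) - ((vpt w : ℍ) : ℂ) = ⟨0, z.im - w.im⟩ := by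
      apply Complex.ext <;> simp [vpt, UpperHalfPlane.coe_mk]
    rw [hv]
    have h2 : ‖(⟨0, z.im - w.im⟩ : ℂ)‖ = |z.im - w.im| := by
      rw [Complex.norm_def, Complex.normSq_apply]
      simp only
      rw [show (0:ℝ) * 0 + (z.im - w.im) * (z.im - w.im) = (z.im - w.im)^2 by ring]
      exact Real.sqrt_sq_eq_abs _
    rw [h2]
    have h3 : ((z : ℂ) - w).im = z.im - w.im := by
      simp [UpperHalfPlane.coe_im]
    have h4 : ((z : ℂ) - w).re ≠ 0 := by
      simp only [Complex.sub_re, UpperHalfPlane.coe_re]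
      exact sub_ne_zero_of_ne h
    apply lt_of_pow_lt_pow_left₀ 2 (norm_nonneg _)
    rw [Complex.sq_norm, Complex.normSq_apply, sq_abs, h3]
    have h5 : 0 < ((z:ℂ) - w).re * ((z:ℂ) - w).re := mul_pos_of_ne_zero h4
    nlinarith [h5]
  calc 2 * Real.arsinh (dist ((vpt z : ℍ) : ℂ) ((vpt w : ℍ) : ℂ) / (2 * Real.sqrt (z.im * w.im)))
      < 2 * Real.arsinh (dist ((z : ℍ) : ℂ) ((w : ℍ) : ℂ) / (2 * Real.sqrt (z.im * w.im))) := by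
        apply mul_lt_mul_of_pos_left _ two_pos
        exact Real.arsinh_lt_arsinh.mpr ((div_lt_div_iff_of_pos_right hs).mpr hnum)
    _ = _ := rfl

lemma vert_mem_Bseg {z w p : ℍ} (h : z.re = w.re) :
    p ∈ Bseg z w ↔ p.re = z.re ∧ p.im ∈ Set.uIcc z.im w.im := by
  have hzw : dist z w = |Real.log z.im - Real.log w.im| := by
    rw [UpperHalfPlane.dist_of_re_eq h, Real.dist_eq]
  constructor
  · intro hp
    by_cases hre : p.re = z.re
    · have d1 : dist z p = |Real.log z.im - Real.log p.im| := by
        rw [UpperHalfPlane.dist_of_re_eq hre.symm, Real.dist_eq]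
      have d2 : dist p w = |Real.log p.im - Real.log w.im| := by
        rw [UpperHalfPlane.dist_of_re_eq (hre.trans h), Real.dist_eq]
      have habs : |Real.log z.im - Real.log p.im| + |Real.log p.im - Real.log w.im|
          = |Real.log z.im - Real.log w.im| := by
        rw [← d1, ← d2, ← hzw]; exact hp
      exact ⟨hre, (log_mem_uIcc_iff p.im_pos z.im_pos w.im_pos).mp (mem_uIcc_iff_abs.mp habs)⟩
    · exfalso
      have l1 : dist (Real.log z.im) (Real.log p.im) < dist z p :=
        dist_log_im_lt (fun hh => hre hh.symm)
      have l2 : dist (Real.log p.im) (Real.log w.im) ≤ dist p w :=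
        UpperHalfPlane.dist_log_im_le p w
      have l3 : dist (Real.log z.im) (Real.log w.im) ≤
          dist (Real.log z.im) (Real.log p.im) + dist (Real.log p.im) (Real.log w.im) :=
        dist_triangle _ _ _
      have l4 : dist z w = dist (Real.log z.im) (Real.log w.im) :=
        UpperHalfPlane.dist_of_re_eq h
      have hp' : dist z p + dist p w = dist z w := hp
      linarith
  · rintro ⟨hre, him⟩
    have d1 : dist z p = |Real.log z.im - Real.log p.im| := by
      rw [UpperHalfPlane.dist_of_re_eq hre.symm, Real.dist_eq]
    have d2 : dist p w = |Real.log p.im - Real.log w.im| := by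
      rw [UpperHalfPlane.dist_of_re_eq (hre.trans h), Real.dist_eq]
    have habs := mem_uIcc_iff_abs.mpr ((log_mem_uIcc_iff p.im_pos z.im_pos w.im_pos).mpr him)
    show dist z p + dist p w = dist z w
    rw [d1, d2, hzw]
    exact habs

lemma exists_iso_to_SV0 {S : Set ℍ} (hS : IsGeo S) :
    ∃ g gi : ℍ → ℍ, Isometry g ∧ Isometry gi ∧ (∀ w, gi (g w) = w) ∧ (∀ w, g (gi w) = w) ∧
      (∀ w, w ∈ S ↔ (g w).re = 0) := by
  rcases hS with ⟨c, r, hr, rfl⟩ | ⟨t, rfl⟩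
  · refine ⟨phiH c r hr, psiH c r hr, isometry_phiH c r hr, ?_, psiH_phiH c r hr,
      phiH_psiH c r hr, ?_⟩
    · refine Isometry.of_dist_eq fun a b => ?_
      calc dist (psiH c r hr a) (psiH c r hr b)
          = dist (phiH c r hr (psiH c r hr a)) (phiH c r hr (psiH c r hr b)) :=
            ((isometry_phiH c r hr).dist_eq _ _).symm
        _ = dist a b := by rw [phiH_psiH, phiH_psiH]
    · intro w
      exact mem_SC_iff_phiH_re c r hr
  · refine ⟨fun w => (-t) +ᵥ w, fun w => t +ᵥ w, UpperHalfPlane.isometry_real_vadd _,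
      UpperHalfPlane.isometry_real_vadd _, ?_, ?_, ?_⟩
    · intro w; show t +ᵥ ((-t) +ᵥ w) = w; rw [vadd_vadd]; simp
    · intro w; show (-t) +ᵥ (t +ᵥ w) = w; rw [vadd_vadd]; simp
    · intro w
      rw [UpperHalfPlane.vadd_re]
      constructor
      · intro hw; rw [show w.re = t from hw]; ring
      · intro hw; show w.re = t; linarith

lemma mem_Bseg_iso' {g : ℍ → ℍ} (hg : Isometry g) {x z p : ℍ} :
    g p ∈ Bseg (g x) (g z) ↔ p ∈ Bseg x z := by
  show dist (g x) (g p) + dist (g p) (g z) = dist (g x) (g z) ↔ _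
  rw [hg.dist_eq, hg.dist_eq, hg.dist_eq]
  rfl

lemma self_mem_Bseg_left (x z : ℍ) : x ∈ Bseg x z := by
  show dist x x + dist x z = dist x z; simp

lemma self_mem_Bseg_right (x z : ℍ) : z ∈ Bseg x z := by
  show dist x z + dist z z = dist x z; simp

lemma Bseg_self (x : ℍ) : Bseg x x = {x} := by
  ext w
  constructor
  · intro h
    have h' : dist x w + dist w x = dist x x := h
    rw [dist_self, dist_comm w x] at h'
    have : dist x w = 0 := by linarith [dist_nonneg (x := x) (y := w)]
    exact (dist_eq_zero.mp this).symm
  · rintro rfl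
    exact self_mem_Bseg_left w w

lemma Bseg_subset_left {x y z : ℍ} (hy : y ∈ Bseg x z) : Bseg x y ⊆ Bseg x z := by
  intro w hw
  have hy' : dist x y + dist y z = dist x z := hy
  have hw' : dist x w + dist w y = dist x y := hw
  have t1 : dist x z ≤ dist x w + dist w z := dist_triangle _ _ _
  have t2 : dist w z ≤ dist w y + dist y z := dist_triangle _ _ _
  show dist x w + dist w z = dist x z
  linarith

lemma Bseg_subset_right {x y z : ℍ} (hy : y ∈ Bseg x z) : Bseg y z ⊆ Bseg x z := by
  intro w hw
  have hy' : dist x y + dist y z = dist x z := hy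
  have hw' : dist y w + dist w z = dist y z := hw
  have t1 : dist x z ≤ dist x w + dist w z := dist_triangle _ _ _
  have t2 : dist x w ≤ dist x y + dist y w := dist_triangle _ _ _
  show dist x w + dist w z = dist x z
  linarith

lemma Bseg_subset_geo {S : Set ℍ} (hS : IsGeo S) {p q : ℍ} (hp : p ∈ S) (hq : q ∈ S) :
    Bseg p q ⊆ S := by
  obtain ⟨g, gi, hg, hgi, hlft, hrt, hmem⟩ := exists_iso_to_SV0 hS
  intro w hw
  have h1 : g w ∈ Bseg (g p) (g q) := (mem_Bseg_iso' hg).mpr hw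
  have hre : (g p).re = (g q).re := ((hmem p).mp hp).trans ((hmem q).mp hq).symm
  have h2 := (vert_mem_Bseg hre).mp h1
  exact (hmem w).mpr (h2.1.trans ((hmem p).mp hp))

lemma exists_geo_through (x z : ℍ) : ∃ S, IsGeo S ∧ x ∈ S ∧ z ∈ S := by
  by_cases h : x.re = z.re
  · exact ⟨SV x.re, Or.inr ⟨x.re, rfl⟩, rfl, h.symm⟩
  · set c := ((x.re^2 + x.im^2) - (z.re^2 + z.im^2)) / (2*(x.re - z.re)) with hc
    have him := x.im_pos
    have him' := z.im_pos
    set r := Real.sqrt ((x.re - c)^2 + x.im^2) with hrdef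
    have hrpos : (0:ℝ) < (x.re - c)^2 + x.im^2 := by positivity
    have hr : 0 < r := Real.sqrt_pos.mpr hrpos
    refine ⟨SC c r, Or.inl ⟨c, r, hr, rfl⟩, ?_, ?_⟩
    · rw [mem_SC_iff hr, hrdef, Real.sq_sqrt hrpos.le]
    · rw [mem_SC_iff hr, hrdef, Real.sq_sqrt hrpos.le]
      have hne : x.re - z.re ≠ 0 := sub_ne_zero_of_ne h
      rw [hc]
      field_simp
      ring

lemma affine_mem_uIcc {a b t : ℝ} (ht : t ∈ Set.Icc (0:ℝ) 1) : a + t*(b-a) ∈ Set.uIcc a b := by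
  obtain ⟨ht0, ht1⟩ := ht
  rcases le_total a b with h | h
  · rw [Set.uIcc_of_le h, Set.mem_Icc]
    constructor <;> nlinarith
  · rw [Set.uIcc_of_ge h, Set.mem_Icc]
    constructor <;> nlinarith

lemma exp_mem_uIcc {a b t : ℝ} (h : t ∈ Set.uIcc a b) :
    Real.exp t ∈ Set.uIcc (Real.exp a) (Real.exp b) := by
  rcases Set.mem_uIcc.mp h with ⟨h1, h2⟩ | ⟨h1, h2⟩
  · exact Set.mem_uIcc.mpr (Or.inl ⟨Real.exp_le_exp.mpr h1, Real.exp_le_exp.mpr h2⟩)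
  · exact Set.mem_uIcc.mpr (Or.inr ⟨Real.exp_le_exp.mpr h1, Real.exp_le_exp.mpr h2⟩)

lemma exists_param {x z : ℍ} (hxz : x ≠ z) :
    ∃ γ : ℝ → ℍ, Continuous γ ∧ γ 0 = x ∧ γ 1 = z ∧ Set.InjOn γ (Set.Icc 0 1) ∧
      γ '' Set.Icc 0 1 = Bseg x z := by
  obtain ⟨S, hS, hxS, hzS⟩ := exists_geo_through x z
  obtain ⟨g, gi, hg, hgi, hlft, hrt, hmem⟩ := exists_iso_to_SV0 hS
  set a := Real.log (g x).im with ha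
  set b := Real.log (g z).im with hb
  have hgre : (g x).re = 0 := (hmem x).mp hxS
  have hgre' : (g z).re = 0 := (hmem z).mp hzS
  have hre : (g x).re = (g z).re := hgre.trans hgre'.symm
  have hgxz : g x ≠ g z := fun h => hxz (by rw [← hlft x, h, hlft])
  have hab : a ≠ b := by
    intro h
    apply hgxz
    apply UpperHalfPlane.ext' hre
    have h2 := congrArg Real.exp h
    rwa [Real.exp_log (g x).im_pos, Real.exp_log (g z).im_pos] at h2
  have hba : b - a ≠ 0 := sub_ne_zero_of_ne (Ne.symm hab)
  set γ : ℝ → ℍ :=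
    fun t => gi (UpperHalfPlane.mk ⟨0, Real.exp (a + t*(b-a))⟩ (by simpa using Real.exp_pos _))
    with hγ
  have hgval : ∀ t, g (γ t) =
      UpperHalfPlane.mk ⟨0, Real.exp (a + t*(b-a))⟩ (by simpa using Real.exp_pos _) :=
    fun t => hrt _
  have key0 : ∀ t : ℝ, (g (γ t)).re = 0 := by
    intro t; rw [hgval t]; rfl
  have keyim : ∀ t : ℝ, (g (γ t)).im = Real.exp (a + t*(b-a)) := by
    intro t; rw [hgval t]; rfl
  have hγ0 : γ 0 = x := by
    have : UpperHalfPlane.mk ⟨0, Real.exp (a + 0*(b-a))⟩ (by simpa using Real.exp_pos _) = g x := by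
      apply UpperHalfPlane.ext
      apply Complex.ext
      · show (0:ℝ) = ((g x : ℍ) : ℂ).re
        rw [UpperHalfPlane.coe_re, hgre]
      · show Real.exp (a + 0*(b-a)) = ((g x : ℍ) : ℂ).im
        rw [UpperHalfPlane.coe_im]
        rw [show a + 0*(b-a) = a by ring, ha, Real.exp_log (g x).im_pos]
    rw [hγ]
    simp only
    rw [this, hlft]
  have hγ1 : γ 1 = z := by
    have : UpperHalfPlane.mk ⟨0, Real.exp (a + 1*(b-a))⟩ (by simpa using Real.exp_pos _) = g z := by
      apply UpperHalfPlane.ext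
      apply Complex.ext
      · show (0:ℝ) = ((g z : ℍ) : ℂ).re
        rw [UpperHalfPlane.coe_re, hgre']
      · show Real.exp (a + 1*(b-a)) = ((g z : ℍ) : ℂ).im
        rw [UpperHalfPlane.coe_im]
        rw [show a + 1*(b-a) = b by ring, hb, Real.exp_log (g z).im_pos]
    rw [hγ]
    simp only
    rw [this, hlft]
  have hinj : Function.Injective γ := by
    intro t t' h
    have h2 : g (γ t) = g (γ t') := by rw [h]
    have h3 := congrArg UpperHalfPlane.im h2
    rw [keyim, keyim] at h3
    have h4 := Real.exp_injective h3
    have h4 : t = t' ∨ b - a = 0 := by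
      rw [← sub_eq_zero (a := t)]; apply mul_eq_zero.mp; linear_combination h4
    rcases h4 with h4 | h4
    · exact h4
    · exact absurd h4 hba
  have hcont : Continuous γ := by
    apply hgi.continuous.comp
    have hvl := (UpperHalfPlane.isometry_vertical_line 0).continuous
    exact hvl.comp (by continuity)
  refine ⟨γ, hcont, hγ0, hγ1, hinj.injOn, ?_⟩
  ext w
  constructor
  · rintro ⟨t, ht, rfl⟩
    rw [← mem_Bseg_iso' hg]
    rw [vert_mem_Bseg hre]
    refine ⟨(key0 t).trans hgre.symm, ?_⟩
    rw [keyim t]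
    have h5 := exp_mem_uIcc (a := a) (b := b) (affine_mem_uIcc (a := a) (b := b) ht)
    rwa [ha, hb, Real.exp_log (g x).im_pos, Real.exp_log (g z).im_pos] at h5
  · intro hw
    have h1 : g w ∈ Bseg (g x) (g z) := (mem_Bseg_iso' hg).mpr hw
    obtain ⟨hw0, hwim⟩ := (vert_mem_Bseg hre).mp h1
    set L := Real.log (g w).im with hL
    have hLuIcc : L ∈ Set.uIcc a b := by
      rcases Set.mem_uIcc.mp hwim with ⟨h2, h3⟩ | ⟨h2, h3⟩
      · exact Set.mem_uIcc.mpr (Or.inl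
          ⟨Real.log_le_log (g x).im_pos h2, Real.log_le_log (g w).im_pos h3⟩)
      · exact Set.mem_uIcc.mpr (Or.inr
          ⟨Real.log_le_log (g z).im_pos h2, Real.log_le_log (g w).im_pos h3⟩)
    set t := (L - a) / (b - a) with htdef
    refine ⟨t, ?_, ?_⟩
    · rw [Set.mem_Icc]
      rcases Set.mem_uIcc.mp hLuIcc with ⟨h2, h3⟩ | ⟨h2, h3⟩
      · have hba' : 0 < b - a := by
          rcases lt_or_eq_of_le (le_trans h2 h3) with h | h
          · linarith
          · exact absurd h hab
        constructor
        · exact div_nonneg (by linarith) hba'.le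
        · rw [div_le_one hba']; linarith
      · have hba' : b - a < 0 := by
          rcases lt_or_eq_of_le (le_trans h2 h3) with h | h
          · linarith
          · exact absurd h.symm hab
        constructor
        · exact div_nonneg_iff.mpr (Or.inr ⟨by linarith, by linarith⟩)
        · rw [div_le_one_iff]
          right; right
          exact ⟨hba', by linarith⟩
    · have hexp : a + t*(b-a) = L := by
        rw [htdef]; field_simp
        ring
      have hmk : UpperHalfPlane.mk ⟨0, Real.exp (a + t*(b-a))⟩ (by simpa using Real.exp_pos _)
          = g w := by
        apply UpperHalfPlane.ext
        apply Complex.ext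
        · show (0:ℝ) = ((g w : ℍ) : ℂ).re
          rw [UpperHalfPlane.coe_re, hw0, hgre]
        · show Real.exp (a + t*(b-a)) = ((g w : ℍ) : ℂ).im
          rw [UpperHalfPlane.coe_im, hexp, hL, Real.exp_log (g w).im_pos]
      rw [hγ]
      simp only
      rw [hmk, hlft]


lemma exists_mid {x z : ℍ} (hxz : x ≠ z) : ∃ m, m ∈ Bseg x z ∧ m ≠ x ∧ m ≠ z := by
  obtain ⟨γ, hcont, h0, h1, hinj, himg⟩ := exists_param hxz
  have hmem : (1/2 : ℝ) ∈ Set.Icc (0:ℝ) 1 := by norm_num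
  have h0' : (0:ℝ) ∈ Set.Icc (0:ℝ) 1 := by norm_num
  have h1' : (1:ℝ) ∈ Set.Icc (0:ℝ) 1 := by norm_num
  refine ⟨γ (1/2), ?_, ?_, ?_⟩
  · rw [← himg]; exact ⟨1/2, hmem, rfl⟩
  · intro h
    rw [← h0] at h
    have := hinj hmem h0' h
    norm_num at this
  · intro h
    rw [← h1] at h
    have := hinj hmem h1' h
    norm_num at this

lemma Bseg_subset_union {x y z : ℍ} (hy : y ∈ Bseg x z) :
    Bseg x z ⊆ Bseg x y ∪ Bseg y z := by
  by_cases hxz : x = z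
  · subst hxz
    intro w hw
    rw [Bseg_self, Set.mem_singleton_iff] at hw
    exact Or.inl (hw ▸ self_mem_Bseg_left x y)
  · obtain ⟨S, hS, hxS, hzS⟩ := exists_geo_through x z
    obtain ⟨g, gi, hg, hgi, hlft, hrt, hmem⟩ := exists_iso_to_SV0 hS
    have hyS : y ∈ S := Bseg_subset_geo hS hxS hzS hy
    have hgre : (g x).re = 0 := (hmem x).mp hxS
    have hgrez : (g z).re = 0 := (hmem z).mp hzS
    have hgrey : (g y).re = 0 := (hmem y).mp hyS
    intro w hw
    have h1 : g w ∈ Bseg (g x) (g z) := (mem_Bseg_iso' hg).mpr hw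
    obtain ⟨hw0, hwim⟩ := (vert_mem_Bseg (hgre.trans hgrez.symm)).mp h1
    have hsub := Set.uIcc_subset_uIcc_union_uIcc (a := (g x).im) (b := (g y).im) (c := (g z).im)
    rcases hsub hwim with h | h
    · left
      have h2 : g w ∈ Bseg (g x) (g y) := (vert_mem_Bseg (hgre.trans hgrey.symm)).mpr ⟨hw0, h⟩
      exact (mem_Bseg_iso' hg).mp h2
    · right
      have h2 : g w ∈ Bseg (g y) (g z) := (vert_mem_Bseg (hgrey.trans hgrez.symm)).mpr
        ⟨hw0.trans (hgre.trans hgrey.symm), h⟩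
      exact (mem_Bseg_iso' hg).mp h2

lemma segCO_eq_diff (x z : ℍ) : segCO x z = Bseg x z \ {z} := rfl

lemma segCO_self (x : ℍ) : segCO x x = ∅ := by
  rw [segCO_eq_diff, Bseg_self]; simp

lemma mem_segCO_left {x z : ℍ} (h : x ≠ z) : x ∈ segCO x z :=
  ⟨self_mem_Bseg_left x z, fun hx => h (Set.mem_singleton_iff.mp hx)⟩

lemma segCO_subset_Bseg (x z : ℍ) : segCO x z ⊆ Bseg x z := Set.diff_subset

lemma Gcross_empty : Gcross ∅ = ∅ := by
  ext s
  simp only [Gcross, Set.mem_setOf_eq, Set.inter_empty, Set.mem_empty_iff_false, iff_false]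
  rintro ⟨z, hz⟩
  exact (Set.singleton_ne_empty z) hz.symm

lemma segCO_disjoint {x y z : ℍ} (h : dist x y + dist y z = dist x z) :
    segCO x y ∩ segCO y z = ∅ := by
  ext w
  simp only [Set.mem_inter_iff, Set.mem_empty_iff_false, iff_false]
  rintro ⟨⟨h1, hw1⟩, h2, hw2⟩
  have h1' : dist x w + dist w y = dist x y := h1
  have h2' : dist y w + dist w z = dist y z := h2
  have t : dist x z ≤ dist x w + dist w z := dist_triangle _ _ _
  have hc : dist w y = dist y w := dist_comm _ _
  have hle : dist w y ≤ 0 := by linarith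
  have heq : w = y := dist_le_zero.mp hle
  exact hw1 (Set.mem_singleton_iff.mpr heq)

lemma cross_of_sign {S : Set ℍ} (hS : IsGeo S) {f : ℍ → ℝ} (hcont : Continuous f)
    (hf0 : ∀ w, f w = 0 ↔ w ∈ S) {a b : ℍ} (hab : a ≠ b) (hsign : f a * f b < 0) :
    ∃ w, S ∩ segCO a b = {w} := by
  obtain ⟨γ, hγc, hγ0, hγ1, hinj, himg⟩ := exists_param hab
  have hfa : f a ≠ 0 := fun h => by rw [h, zero_mul] at hsign; exact lt_irrefl 0 hsign
  have hfb : f b ≠ 0 := fun h => by rw [h, mul_zero] at hsign; exact lt_irrefl 0 hsign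
  have h0mem : (0:ℝ) ∈ Set.uIcc ((f ∘ γ) 0) ((f ∘ γ) 1) := by
    simp only [Function.comp_apply, hγ0, hγ1]
    rcases mul_neg_iff.mp hsign with ⟨h1, h2⟩ | ⟨h1, h2⟩
    · exact Set.mem_uIcc.mpr (Or.inr ⟨h2.le, h1.le⟩)
    · exact Set.mem_uIcc.mpr (Or.inl ⟨h1.le, h2.le⟩)
  obtain ⟨t, ht, hft⟩ := intermediate_value_uIcc ((hcont.comp hγc).continuousOn) h0mem
  have htIcc : t ∈ Set.Icc (0:ℝ) 1 := by rwa [Set.uIcc_of_le zero_le_one] at ht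
  have hft' : f (γ t) = 0 := hft
  have hwS : γ t ∈ S := (hf0 _).mp hft'
  have hwB : γ t ∈ Bseg a b := by rw [← himg]; exact ⟨t, htIcc, rfl⟩
  have hwa : γ t ≠ a := fun h => hfa (by rw [← h]; exact hft')
  have hwb : γ t ≠ b := fun h => hfb (by rw [← h]; exact hft')
  refine ⟨γ t, Set.eq_singleton_iff_unique_mem.mpr ⟨⟨hwS, hwB,
    fun hmem => hwb (Set.mem_singleton_iff.mp hmem)⟩, ?_⟩⟩
  rintro p ⟨hpS, hpseg⟩
  by_contra hpw
  obtain ⟨L, hL, haL, hbL⟩ := exists_geo_through a b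
  have hBL := Bseg_subset_geo hL haL hbL
  have hSL : S = L := geo_unique hS hL hpw hpS hwS (hBL (segCO_subset_Bseg a b hpseg)) (hBL hwB)
  exact hfa ((hf0 a).mpr (hSL ▸ haL))

lemma sign_of_cross_aux {S : Set ℍ} (hS : IsGeo S) {f : ℍ → ℝ} (hcont : Continuous f)
    (hf0 : ∀ w, f w = 0 ↔ w ∈ S)
    (hinj2 : ∀ L, IsGeo L → (∀ p q, p ∈ L → q ∈ L → f p = f q → p = q) ∨
        (∀ p q, p ∈ L → q ∈ L → f p = f q))
    {x z w : ℍ} (hxz : x ≠ z) (hfx : 0 < f x) (hfz : 0 < f z)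
    (hw : S ∩ Bseg x z = {w}) : False := by
  obtain ⟨γ, hγc, hγ0, hγ1, hinj, himg⟩ := exists_param hxz
  have hwmem : w ∈ S ∩ Bseg x z := (Set.eq_singleton_iff_unique_mem.mp hw).1
  obtain ⟨tw, htw, hγtw⟩ : ∃ t ∈ Set.Icc (0:ℝ) 1, γ t = w := by
    have h2 : w ∈ γ '' Set.Icc 0 1 := by rw [himg]; exact hwmem.2
    obtain ⟨t, ht, h⟩ := h2
    exact ⟨t, ht, h⟩
  set m := min (f x) (f z) with hm
  have hm0 : 0 < m := lt_min hfx hfz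
  have hfw : f w = 0 := (hf0 w).mpr hwmem.1
  have hmem1 : m/2 ∈ Set.uIcc ((f ∘ γ) 0) ((f ∘ γ) tw) := by
    simp only [Function.comp_apply, hγ0, hγtw, hfw]
    exact Set.mem_uIcc.mpr (Or.inr ⟨by linarith, by linarith [min_le_left (f x) (f z)]⟩)
  obtain ⟨t1, ht1, hft1⟩ := intermediate_value_uIcc ((hcont.comp hγc).continuousOn) hmem1
  have hmem2 : m/2 ∈ Set.uIcc ((f ∘ γ) tw) ((f ∘ γ) 1) := by
    simp only [Function.comp_apply, hγ1, hγtw, hfw]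
    exact Set.mem_uIcc.mpr (Or.inl ⟨by linarith, by linarith [min_le_right (f x) (f z)]⟩)
  obtain ⟨t2, ht2, hft2⟩ := intermediate_value_uIcc ((hcont.comp hγc).continuousOn) hmem2
  have htw0 : (0:ℝ) ≤ tw := htw.1
  have htw1 : tw ≤ 1 := htw.2
  rw [Set.uIcc_of_le htw0] at ht1
  rw [Set.uIcc_of_le htw1] at ht2
  have ht1I : t1 ∈ Set.Icc (0:ℝ) 1 := ⟨ht1.1, le_trans ht1.2 htw1⟩
  have ht2I : t2 ∈ Set.Icc (0:ℝ) 1 := ⟨le_trans htw0 ht2.1, ht2.2⟩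
  have hft1' : f (γ t1) = m/2 := hft1
  have hft2' : f (γ t2) = m/2 := hft2
  have ht12 : t1 ≠ t2 := by
    intro h
    have h2 : t1 = tw := le_antisymm ht1.2 (h ▸ ht2.1)
    rw [h2, hγtw, hfw] at hft1'
    linarith
  have hne : γ t1 ≠ γ t2 := fun h => ht12 (hinj ht1I ht2I h)
  obtain ⟨L, hL, hxL, hzL⟩ := exists_geo_through x z
  have hBL := Bseg_subset_geo hL hxL hzL
  have hp1 : γ t1 ∈ L := hBL (by rw [← himg]; exact ⟨t1, ht1I, rfl⟩)
  have hp2 : γ t2 ∈ L := hBL (by rw [← himg]; exact ⟨t2, ht2I, rfl⟩)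
  rcases hinj2 L hL with hI | hC
  · exact hne (hI _ _ hp1 hp2 (hft1'.trans hft2'.symm))
  · have hwL : w ∈ L := hBL hwmem.2
    have h3 := hC w x hwL hxL
    rw [hfw] at h3
    linarith

lemma sign_of_cross {S : Set ℍ} (hS : IsGeo S) {f : ℍ → ℝ} (hcont : Continuous f)
    (hf0 : ∀ w, f w = 0 ↔ w ∈ S)
    (hinj2 : ∀ L, IsGeo L → (∀ p q, p ∈ L → q ∈ L → f p = f q → p = q) ∨
        (∀ p q, p ∈ L → q ∈ L → f p = f q))
    {x z w : ℍ} (hxz : x ≠ z) (hx : x ∉ S) (hz : z ∉ S)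
    (hw : S ∩ Bseg x z = {w}) : f x * f z < 0 := by
  have hfx : f x ≠ 0 := fun h => hx ((hf0 x).mp h)
  have hfz : f z ≠ 0 := fun h => hz ((hf0 z).mp h)
  rcases hfx.lt_or_gt with h1 | h1 <;> rcases hfz.lt_or_gt with h2 | h2
  · exfalso
    refine sign_of_cross_aux hS (f := fun w => -f w) hcont.neg ?_ ?_ hxz
      (by simpa using h1) (by simpa using h2) hw
    · intro w2
      rw [neg_eq_zero]
      exact hf0 w2
    · intro L hL
      rcases hinj2 L hL with h | h
      · left
        intro p q hp hq hpq
        have hpq : -f p = -f q := hpq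
        exact h p q hp hq (by linarith)
      · right
        intro p q hp hq
        simp only [neg_inj]
        exact h p q hp hq
  · exact mul_neg_of_neg_of_pos h1 h2
  · exact mul_neg_of_pos_of_neg h1 h2
  · exact absurd (sign_of_cross_aux hS hcont hf0 hinj2 hxz h1 h2 hw) id


lemma Gcross_triangle (x y z : ℍ) :
    Gcross (segCO x z) ⊆ Gcross (segCO x y) ∪ Gcross (segCO y z) := by
  by_cases hxz : x = z
  · subst hxz; rw [segCO_self, Gcross_empty]; exact Set.empty_subset _
  by_cases hxy : x = y
  · subst hxy; intro s hs; exact Or.inr hs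
  by_cases hyz : y = z
  · subst hyz; intro s hs; exact Or.inl hs
  intro s hs
  obtain ⟨w, hw⟩ := hs
  have hwmem : w ∈ geod s ∩ segCO x z := (Set.eq_singleton_iff_unique_mem.mp hw).1
  have huniq := (Set.eq_singleton_iff_unique_mem.mp hw).2
  have hG : IsGeo (geod s) := isGeo_geod ⟨w, hwmem.1⟩
  obtain ⟨L, hL, hxL, hzL⟩ := exists_geo_through x z
  have hBL := Bseg_subset_geo hL hxL hzL
  obtain ⟨mxz, hmB, hmx, hmz⟩ := exists_mid hxz
  have hxseg : x ∈ segCO x z := mem_segCO_left hxz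
  have hmseg : mxz ∈ segCO x z := ⟨hmB, fun h => hmz (Set.mem_singleton_iff.mp h)⟩
  have hGneL : geod s ≠ L := by
    intro h
    have h1 : x = w := huniq x ⟨h ▸ hxL, hxseg⟩
    have h2 : mxz = w := huniq mxz ⟨h ▸ (hBL hmB), hmseg⟩
    exact hmx (h2.trans h1.symm)
  have honeB : geod s ∩ Bseg x z = {w} := by
    apply Set.eq_singleton_iff_unique_mem.mpr
    refine ⟨⟨hwmem.1, segCO_subset_Bseg x z hwmem.2⟩, ?_⟩
    rintro p ⟨hpG, hpB⟩
    by_contra hpw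
    exact hGneL (geo_unique hG hL hpw hpG hwmem.1 (hBL hpB)
      (hBL (segCO_subset_Bseg _ _ hwmem.2)))
  have hzG : z ∉ geod s := by
    intro hzG
    have h3 : z = w := (Set.eq_singleton_iff_unique_mem.mp honeB).2 z ⟨hzG, self_mem_Bseg_right x z⟩
    exact hwmem.2.2 (Set.mem_singleton_iff.mpr h3.symm)
  by_cases hxG : x ∈ geod s
  · by_cases h2 : ∀ p ∈ geod s ∩ Bseg x y, p = x
    · left
      refine ⟨x, Set.eq_singleton_iff_unique_mem.mpr ⟨⟨hxG, mem_segCO_left hxy⟩, ?_⟩⟩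
      rintro p ⟨hpG, hpseg⟩
      exact h2 p ⟨hpG, segCO_subset_Bseg _ _ hpseg⟩
    · push_neg at h2
      obtain ⟨p, ⟨hpG, hpB⟩, hpx⟩ := h2
      obtain ⟨L', hL', hxL', hyL'⟩ := exists_geo_through x y
      have hBL' := Bseg_subset_geo hL' hxL' hyL'
      have hGeqL' : geod s = L' := geo_unique hG hL' hpx hpG hxG (hBL' hpB) hxL'
      have hyG : y ∈ geod s := hGeqL' ▸ hyL'
      by_cases h3 : ∀ p ∈ geod s ∩ Bseg y z, p = y
      · right
        refine ⟨y, Set.eq_singleton_iff_unique_mem.mpr ⟨⟨hyG, mem_segCO_left hyz⟩, ?_⟩⟩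
        rintro q ⟨hqG, hqseg⟩
        exact h3 q ⟨hqG, segCO_subset_Bseg _ _ hqseg⟩
      · push_neg at h3
        obtain ⟨q, ⟨hqG, hqB⟩, hqy⟩ := h3
        obtain ⟨L'', hL'', hyL'', hzL''⟩ := exists_geo_through y z
        have hBL'' := Bseg_subset_geo hL'' hyL'' hzL''
        have hGeqL'' : geod s = L'' := geo_unique hG hL'' hqy hqG hyG (hBL'' hqB) hyL''
        exact absurd (hGeqL'' ▸ hzL'') hzG
  · by_cases hyG : y ∈ geod s
    · right
      refine ⟨y, Set.eq_singleton_iff_unique_mem.mpr ⟨⟨hyG, mem_segCO_left hyz⟩, ?_⟩⟩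
      rintro q ⟨hqG, hqseg⟩
      by_contra hqy
      obtain ⟨L'', hL'', hyL'', hzL''⟩ := exists_geo_through y z
      have hBL'' := Bseg_subset_geo hL'' hyL'' hzL''
      have hGeqL'' : geod s = L'' := geo_unique hG hL'' hqy hqG hyG
        (hBL'' (segCO_subset_Bseg _ _ hqseg)) hyL''
      exact hzG (hGeqL'' ▸ hzL'')
    · obtain ⟨f, hfc, hf0, hfinj⟩ := exists_side hG
      have hsxz : f x * f z < 0 := sign_of_cross hG hfc hf0 hfinj hxz hxG hzG honeB
      have hfy : f y ≠ 0 := fun h => hyG ((hf0 y).mp h)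
      have hcases : f x * f y < 0 ∨ f y * f z < 0 := by
        rcases hfy.lt_or_gt with hy1 | hy1
        · rcases mul_neg_iff.mp hsxz with ⟨ha, hb⟩ | ⟨ha, hb⟩
          · exact Or.inl (mul_neg_of_pos_of_neg ha hy1)
          · exact Or.inr (mul_neg_of_neg_of_pos hy1 hb)
        · rcases mul_neg_iff.mp hsxz with ⟨ha, hb⟩ | ⟨ha, hb⟩
          · exact Or.inr (mul_neg_of_pos_of_neg hy1 hb)
          · exact Or.inl (mul_neg_of_neg_of_pos ha hy1)
      rcases hcases with h | h
      · exact Or.inl (cross_of_sign hG hfc hf0 hxy h)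
      · exact Or.inr (cross_of_sign hG hfc hf0 hyz h)

lemma cross_claim {x y z : ℍ} (hxy : x ≠ y) (hyz : y ≠ z)
    (hy : dist x y + dist y z = dist x z) {s : Sym2 (OnePoint ℝ)}
    (hs : s ∈ Gcross (segCO x y)) : geod s ∩ segCO y z = ∅ := by
  obtain ⟨p, hp⟩ := hs
  have hpmem := (Set.eq_singleton_iff_unique_mem.mp hp).1
  have huniq := (Set.eq_singleton_iff_unique_mem.mp hp).2
  by_contra hne
  obtain ⟨q, hq⟩ := Set.nonempty_iff_ne_empty.mpr hne
  have hyB : y ∈ Bseg x z := hy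
  have hG : IsGeo (geod s) := isGeo_geod ⟨p, hpmem.1⟩
  obtain ⟨L, hL, hxL, hzL⟩ := exists_geo_through x z
  have hBL := Bseg_subset_geo hL hxL hzL
  have hyL : y ∈ L := hBL hyB
  have hpB : p ∈ Bseg x z := Bseg_subset_left hyB (segCO_subset_Bseg _ _ hpmem.2)
  have hqB : q ∈ Bseg x z := Bseg_subset_right hyB (segCO_subset_Bseg _ _ hq.2)
  have hpq : p ≠ q := by
    intro h
    have h2 : p ∈ segCO x y ∩ segCO y z := ⟨hpmem.2, h ▸ hq.2⟩
    rw [segCO_disjoint hy] at h2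
    exact h2
  have hGL : geod s = L := geo_unique hG hL hpq hpmem.1 hq.1 (hBL hpB) (hBL hqB)
  have hsub : Bseg x y ⊆ geod s := by
    rw [hGL]
    exact Bseg_subset_geo hL hxL hyL
  obtain ⟨m, hmB, hmx, hmy⟩ := exists_mid hxy
  have h1 : x = p := huniq x ⟨hsub (self_mem_Bseg_left x y), mem_segCO_left hxy⟩
  have h2 : m = p := huniq m ⟨hsub hmB, ⟨hmB, fun hc => hmy (Set.mem_singleton_iff.mp hc)⟩⟩
  exact hmx (h2.trans h1.symm)

lemma cross_claim' {x y z : ℍ} (hxy : x ≠ y) (hyz : y ≠ z)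
    (hy : dist x y + dist y z = dist x z) {s : Sym2 (OnePoint ℝ)}
    (hs : s ∈ Gcross (segCO y z)) : geod s ∩ segCO x y = ∅ := by
  obtain ⟨p, hp⟩ := hs
  have hpmem := (Set.eq_singleton_iff_unique_mem.mp hp).1
  have huniq := (Set.eq_singleton_iff_unique_mem.mp hp).2
  by_contra hne
  obtain ⟨q, hq⟩ := Set.nonempty_iff_ne_empty.mpr hne
  have hyB : y ∈ Bseg x z := hy
  have hG : IsGeo (geod s) := isGeo_geod ⟨p, hpmem.1⟩
  obtain ⟨L, hL, hxL, hzL⟩ := exists_geo_through x z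
  have hBL := Bseg_subset_geo hL hxL hzL
  have hyL : y ∈ L := hBL hyB
  have hpB : p ∈ Bseg x z := Bseg_subset_right hyB (segCO_subset_Bseg _ _ hpmem.2)
  have hqB : q ∈ Bseg x z := Bseg_subset_left hyB (segCO_subset_Bseg _ _ hq.2)
  have hpq : p ≠ q := by
    intro h
    have h2 : q ∈ segCO x y ∩ segCO y z := ⟨hq.2, h ▸ hpmem.2⟩
    rw [segCO_disjoint hy] at h2
    exact h2
  have hGL : geod s = L := geo_unique hG hL hpq hpmem.1 hq.1 (hBL hpB) (hBL hqB)
  have hsub : Bseg y z ⊆ geod s := by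
    rw [hGL]
    exact Bseg_subset_geo hL hyL hzL
  obtain ⟨m, hmB, hmy, hmz⟩ := exists_mid hyz
  have h1 : y = p := huniq y ⟨hsub (self_mem_Bseg_left y z), mem_segCO_left hyz⟩
  have h2 : m = p := huniq m ⟨hsub hmB, ⟨hmB, fun hc => hmz (Set.mem_singleton_iff.mp hc)⟩⟩
  exact hmy (h2.trans h1.symm)

lemma segCO_split {x y z : ℍ} (hyz : y ≠ z)
    (hy : dist x y + dist y z = dist x z) :
    segCO x z = segCO x y ∪ segCO y z := by
  have hyB : y ∈ Bseg x z := hy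
  apply Set.Subset.antisymm
  · rintro w ⟨hwB, hwz⟩
    rcases Bseg_subset_union hyB hwB with h | h
    · by_cases hwy : w = y
      · right
        exact ⟨hwy ▸ self_mem_Bseg_left y z, hwz⟩
      · left
        exact ⟨h, fun hc => hwy (Set.mem_singleton_iff.mp hc)⟩
    · right
      exact ⟨h, hwz⟩
  · rintro w (⟨hwB, hwy⟩ | ⟨hwB, hwz⟩)
    · refine ⟨Bseg_subset_left hyB hwB, ?_⟩
      intro hc
      have hwz : w = z := Set.mem_singleton_iff.mp hc
      have h1 : dist x w + dist w y = dist x y := hwB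
      have h5 : dist x w = dist x z := by rw [hwz]
      have h6 : dist w y = dist z y := by rw [hwz]
      have h7 : dist z y = dist y z := dist_comm _ _
      have h3 : dist y z = 0 := by linarith
      exact hyz (dist_eq_zero.mp h3)
    · exact ⟨Bseg_subset_right hyB hwB, hwz⟩

lemma Gcross_split {x y z : ℍ} (hxy : x ≠ y) (hyz : y ≠ z)
    (hy : dist x y + dist y z = dist x z) :
    Gcross (segCO x z) = Gcross (segCO x y) ∪ Gcross (segCO y z) ∧
      Disjoint (Gcross (segCO x y)) (Gcross (segCO y z)) := by
  have hsplit := segCO_split hyz hy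
  constructor
  · apply Set.Subset.antisymm
    · intro s hs
      obtain ⟨w, hw⟩ := hs
      rw [hsplit, Set.inter_union_distrib_left] at hw
      have hwmem : w ∈ geod s ∩ segCO x y ∪ geod s ∩ segCO y z := by
        rw [hw]; exact rfl
      rcases hwmem with hwA | hwB
      · left
        refine ⟨w, Set.Subset.antisymm ?_ (Set.singleton_subset_iff.mpr hwA)⟩
        intro p hp
        rw [← hw]
        exact Or.inl hp
      · right
        refine ⟨w, Set.Subset.antisymm ?_ (Set.singleton_subset_iff.mpr hwB)⟩
        intro p hp
        rw [← hw]
        exact Or.inr hp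
    · rintro s (hs | hs)
      · obtain ⟨w, hw⟩ := hs
        have hB0 : geod s ∩ segCO y z = ∅ := cross_claim hxy hyz hy ⟨w, hw⟩
        refine ⟨w, ?_⟩
        rw [hsplit, Set.inter_union_distrib_left, hw, hB0, Set.union_empty]
      · obtain ⟨w, hw⟩ := hs
        have hA0 : geod s ∩ segCO x y = ∅ := cross_claim' hxy hyz hy ⟨w, hw⟩
        refine ⟨w, ?_⟩
        rw [hsplit, Set.inter_union_distrib_left, hw, hA0, Set.empty_union]
  · rw [Set.disjoint_left]
    intro s hs1 hs2
    have hB0 : geod s ∩ segCO y z = ∅ := cross_claim hxy hyz hy hs1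
    obtain ⟨w', hw'⟩ := hs2
    rw [hB0] at hw'
    exact (Set.singleton_ne_empty w') hw'.symm

theorem dmu_is_straight_pseudo_distance [MeasurableSpace (Sym2 (OnePoint ℝ))]
    (μ : Measure (Sym2 (OnePoint ℝ)))
    (hmeas : ∀ x y : ℍ, MeasurableSet (Gcross (segCO x y)))
    (hfin : ∀ x y : ℍ, μ (Gcross (segCO x y)) < ⊤) :
    let d : ℍ → ℍ → ℝ := fun x y =>
      (1 / 2) * ((μ (Gcross (segCO x y))).toReal + (μ (Gcross (segCO y x))).toReal)
    (∀ x y : ℍ, 0 ≤ d x y) ∧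
    (∀ x : ℍ, d x x = 0) ∧
    (∀ x y : ℍ, d x y = d y x) ∧
    (∀ x y z : ℍ, d x z ≤ d x y + d y z) ∧
    (∀ x y z : ℍ, dist x y + dist y z = dist x z → d x z = d x y + d y z) := by
  intro d
  refine ⟨?_, ?_, ?_, ?_, ?_⟩
  · intro x y
    simp only [d]
    positivity
  · intro x
    simp only [d, segCO_self, Gcross_empty, measure_empty, ENNReal.toReal_zero]
    ring
  · intro x y
    simp only [d]
    ring
  · intro x y z
    have key : ∀ a b c : ℍ, (μ (Gcross (segCO a c))).toReal ≤
        (μ (Gcross (segCO a b))).toReal + (μ (Gcross (segCO b c))).toReal := by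
      intro a b c
      have h1 : μ (Gcross (segCO a c)) ≤ μ (Gcross (segCO a b)) + μ (Gcross (segCO b c)) :=
        le_trans (measure_mono (Gcross_triangle a b c)) (measure_union_le _ _)
      have hfa := (hfin a b).ne
      have hfb := (hfin b c).ne
      calc (μ (Gcross (segCO a c))).toReal
          ≤ (μ (Gcross (segCO a b)) + μ (Gcross (segCO b c))).toReal :=
            ENNReal.toReal_mono (ENNReal.add_ne_top.mpr ⟨hfa, hfb⟩) h1
        _ = _ := ENNReal.toReal_add hfa hfb
    simp only [d]
    have k1 := key x y z
    have k2 := key z y x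
    linarith
  · intro x y z hdist
    by_cases hxy : x = y
    · subst hxy
      simp only [d, segCO_self, Gcross_empty, measure_empty, ENNReal.toReal_zero]
      ring
    by_cases hyz : y = z
    · subst hyz
      simp only [d, segCO_self, Gcross_empty, measure_empty, ENNReal.toReal_zero]
      ring
    have hxz : x ≠ z := by
      intro h
      subst h
      rw [dist_self] at hdist
      have h2 : dist x y = dist y x := dist_comm _ _
      have h3 : dist x y = 0 := by linarith [dist_nonneg (x := x) (y := y)]
      exact hxy (dist_eq_zero.mp h3)
    obtain ⟨hu1, hdisj1⟩ := Gcross_split hxy hyz hdist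
    have hdist' : dist z y + dist y x = dist z x := by
      rw [dist_comm z y, dist_comm y x, dist_comm z x]
      linarith
    obtain ⟨hu2, hdisj2⟩ := Gcross_split (Ne.symm hyz) (Ne.symm hxy) hdist'
    have m1 : μ (Gcross (segCO x z)) = μ (Gcross (segCO x y)) + μ (Gcross (segCO y z)) := by
      rw [hu1, measure_union hdisj1 (hmeas y z)]
    have m2 : μ (Gcross (segCO z x)) = μ (Gcross (segCO z y)) + μ (Gcross (segCO y x)) := by
      rw [hu2, measure_union hdisj2 (hmeas y x)]
    simp only [d]
    rw [m1, m2, ENNReal.toReal_add (hfin x y).ne (hfin y z).ne,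
      ENNReal.toReal_add (hfin z y).ne (hfin y x).ne]
    ring
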